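/- For all n ≥ 1, |T_n| = |S_n| − Σ_{i=1}^{n-1} |T_i| · |S_{n-i}|, where T_m is the set of strong score sequences of length m and S_m the set of score sequences of length m. -/

import Mathlib

/-- A score sequence: nondecreasing, entries in `[0, n-1]`, prefix sums at least
`binom k 2`, and total sum `binom n 2`. -/
def IsScoreSeq (s : List ℕ) : Prop :=
  s.Pairwise (· ≤ ·) ∧ (∀ x ∈ s, x < s.length) ∧
    (∀ k, 0 < k → k < s.length → k.choose 2 ≤ (s.take k).sum) ∧
    s.sum = s.length.choose 2

/-- A strong score sequence: nonempty and all proper prefix-sum inequalities strict. -/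
def IsStrongScoreSeq (s : List ℕ) : Prop :=
  IsScoreSeq s ∧ s ≠ [] ∧ ∀ k, 0 < k → k < s.length → k.choose 2 < (s.take k).sum

/-- Direct sum of score sequences: concatenate `u` with `v` shifted up by `u.length`. -/
def dsum (u v : List ℕ) : List ℕ := u ++ v.map (· + u.length)

/-- Iterated direct sum of a list of score sequences. -/
def dsumAll (ts : List (List ℕ)) : List ℕ := ts.foldl dsum []

/-- `s + j`: entries shifted by `j`, reduced modulo the length, sorted nondecreasingly. -/
def shift (s : List ℕ) (j : ℕ) : List ℕ :=
  Multiset.sort ((s.map fun x => (x + j) % s.length : List ℕ) : Multiset ℕ) (· ≤ ·)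


/-- The number of score sequences of length `m`. -/
noncomputable def scoreCard (m : ℕ) : ℕ := Nat.card {s : List ℕ // IsScoreSeq s ∧ s.length = m}

/-- The number of strong score sequences of length `m`. -/
noncomputable def strongCard (m : ℕ) : ℕ := Nat.card {s : List ℕ // IsStrongScoreSeq s ∧ s.length = m}

open List Finset

lemma choose_two_succ (n : ℕ) : (n+1).choose 2 = n.choose 2 + n := by
  have := Nat.choose_succ_succ n 1
  simp [Nat.choose_one_right] at this
  omega

lemma choose_two_add (a b : ℕ) : (a+b).choose 2 = a.choose 2 + a*b + b.choose 2 := by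
  induction b with
  | zero => simp
  | succ b ih => rw [← Nat.add_assoc, choose_two_succ, choose_two_succ, ih]; ring

lemma sum_map_add_const (l : List ℕ) (k : ℕ) :
    (l.map (· + k)).sum = l.sum + l.length * k := by
  induction l with
  | nil => simp
  | cons a l ih =>
    simp only [List.map_cons, List.sum_cons, List.length_cons, ih, Nat.add_mul, Nat.one_mul]
    omega

lemma sum_map_sub_const (l : List ℕ) (k : ℕ) (h : ∀ x ∈ l, k ≤ x) :
    (l.map (· - k)).sum + l.length * k = l.sum := by
  induction l with
  | nil => simp
  | cons a l ih =>
    have ha := h a (by simp)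
    have := ih (fun x hx => h x (by simp [hx]))
    simp only [List.map_cons, List.sum_cons, List.length_cons, Nat.add_mul, Nat.one_mul]
    omega

lemma sorted_getElem_le {l : List ℕ} (h : l.Pairwise (· ≤ ·)) {i j : ℕ} (hij : i ≤ j)
    (hj : j < l.length) : l[i]'(lt_of_le_of_lt hij hj) ≤ l[j] := by
  rcases eq_or_lt_of_le hij with rfl | hlt
  · exact le_refl _
  · exact List.pairwise_iff_getElem.mp h i j (lt_of_le_of_lt hij hj) hj hlt

lemma dsum_length (u t : List ℕ) : (dsum u t).length = u.length + t.length := by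
  simp [dsum]

lemma dsum_take_le {u t : List ℕ} {j : ℕ} (hj : j ≤ u.length) :
    (dsum u t).take j = u.take j := by
  simp [dsum, List.take_append_of_le_length hj]

lemma dsum_take_add (u t : List ℕ) (i : ℕ) :
    (dsum u t).take (u.length + i) = u ++ (t.take i).map (· + u.length) := by
  simp [dsum, List.take_append, List.map_take]

lemma dsum_take_sum {u t : List ℕ} {i : ℕ} (hi : i ≤ t.length) :
    ((dsum u t).take (u.length + i)).sum = u.sum + (t.take i).sum + i * u.length := by
  rw [dsum_take_add, List.sum_append, sum_map_add_const]
  have h : (t.take i).length = i := by simp [hi]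
  rw [h, Nat.add_assoc]

lemma isScoreSeq_dsum {u t : List ℕ} (hu : IsScoreSeq u) (ht : IsStrongScoreSeq t) :
    IsScoreSeq (dsum u t) := by
  obtain ⟨hus, hub, hup, hut⟩ := hu
  obtain ⟨⟨hts, htb, htp, htt⟩, htne, htst⟩ := ht
  refine ⟨?_, ?_, ?_, ?_⟩
  · rw [dsum]
    refine List.pairwise_append.mpr ⟨hus, ?_, ?_⟩
    · exact List.Pairwise.map _ (fun a b h => by omega) hts
    · intro x hx y hy
      obtain ⟨z, hz, rfl⟩ := List.mem_map.mp hy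
      have := hub x hx; omega
  · intro x hx
    rw [dsum_length]
    rw [dsum, List.mem_append] at hx
    rcases hx with hx | hx
    · have := hub x hx; omega
    · obtain ⟨z, hz, rfl⟩ := List.mem_map.mp hx
      have := htb z hz; omega
  · intro j hj hjlen
    rw [dsum_length] at hjlen
    rcases le_or_gt j u.length with hjk | hjk
    · rw [dsum_take_le hjk]
      rcases eq_or_lt_of_le hjk with heq | hlt
      · rw [heq, List.take_length]
        exact le_of_eq hut.symm
      · exact hup j hj hlt
    · obtain ⟨i, rfl⟩ : ∃ i, j = u.length + i := ⟨j - u.length, by omega⟩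
      have hi1 : 0 < i := by omega
      have hi2 : i < t.length := by omega
      rw [dsum_take_sum (le_of_lt hi2), hut]
      have h1 := htst i hi1 hi2
      rw [choose_two_add]
      have h2 : i * u.length = u.length * i := Nat.mul_comm _ _
      omega
  · rw [dsum_length, dsum, List.sum_append, sum_map_add_const, hut, htt, choose_two_add]
    ring

lemma dsum_take_len_sum {u t : List ℕ} (hu : IsScoreSeq u) :
    ((dsum u t).take u.length).sum = u.length.choose 2 := by
  rw [dsum_take_le (le_refl _), List.take_length, hu.2.2.2]

lemma dsum_take_sum_gt {u t : List ℕ} (hu : IsScoreSeq u) (ht : IsStrongScoreSeq t)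
    {j : ℕ} (hj : u.length < j) (hj2 : j < u.length + t.length) :
    j.choose 2 < ((dsum u t).take j).sum := by
  obtain ⟨i, rfl⟩ : ∃ i, j = u.length + i := ⟨j - u.length, by omega⟩
  have hi1 : 0 < i := by omega
  have hi2 : i < t.length := by omega
  rw [dsum_take_sum (le_of_lt hi2), hu.2.2.2]
  have h1 := ht.2.2 i hi1 hi2
  rw [choose_two_add]
  have h2 : i * u.length = u.length * i := Nat.mul_comm _ _
  omega

lemma dsum_inj {u t u' t' : List ℕ} (hu : IsScoreSeq u) (ht : IsStrongScoreSeq t)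
    (hu' : IsScoreSeq u') (ht' : IsStrongScoreSeq t') (h : dsum u t = dsum u' t') :
    u = u' ∧ t = t' := by
  have hlen : u.length + t.length = u'.length + t'.length := by
    rw [← dsum_length, ← dsum_length, h]
  have htpos : 0 < t.length := List.length_pos_iff.mpr ht.2.1
  have htpos' : 0 < t'.length := List.length_pos_iff.mpr ht'.2.1
  have hkk : u.length = u'.length := by
    by_contra hne
    rcases Nat.lt_or_ge u.length u'.length with hlt | hge
    · have h1 := dsum_take_sum_gt hu ht (j := u'.length) hlt (by omega)
      have h2 := dsum_take_len_sum (t := t') hu'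
      rw [h, h2] at h1
      omega
    · have hlt : u'.length < u.length := by omega
      have h1 := dsum_take_sum_gt hu' ht' (j := u.length) hlt (by omega)
      have h2 := dsum_take_len_sum (t := t) hu
      rw [← h, h2] at h1
      omega
  unfold dsum at h
  obtain ⟨h1, h2⟩ := List.append_inj h hkk
  refine ⟨h1, ?_⟩
  rw [hkk] at h2
  exact List.map_injective_iff.mpr (fun a b => by omega) h2

lemma exists_decomp {s : List ℕ} (hs : IsScoreSeq s) (hne : s ≠ []) :
    ∃ u t, IsScoreSeq u ∧ IsStrongScoreSeq t ∧ dsum u t = s ∧ u.length < s.length := by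
  obtain ⟨hss, hsb, hsp, hst⟩ := hs
  set n := s.length with hn
  have hnpos : 0 < n := List.length_pos_iff.mpr hne
  obtain ⟨k, hkdef⟩ : ∃ k, k = Nat.findGreatest (fun j => (s.take j).sum = j.choose 2) (n-1) :=
    ⟨_, rfl⟩
  have hk : (s.take k).sum = k.choose 2 := by
    rw [hkdef]; exact Nat.findGreatest_spec (P := fun j => (s.take j).sum = j.choose 2) (Nat.zero_le _) rfl
  have hkle : k ≤ n - 1 := hkdef ▸ Nat.findGreatest_le _
  have hkn : k < n := by omega
  have hstrict : ∀ j, k < j → j < n → j.choose 2 < (s.take j).sum := by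
    intro j h1 h2
    have hge : j.choose 2 ≤ (s.take j).sum := hsp j (by omega) h2
    have hne' : ¬ ((s.take j).sum = j.choose 2) := by
      rw [hkdef] at h1
      exact Nat.findGreatest_is_greatest (P := fun j => (s.take j).sum = j.choose 2) h1 (by omega)
    omega
  have hsk : k ≤ s[k]'(by omega) := by
    have hsum : (s.take (k+1)).sum = (s.take k).sum + s[k]'(by omega) :=
      List.sum_take_succ s k (by omega)
    rcases Nat.lt_or_ge (k+1) n with hlt | hge2
    · have h1 := hstrict (k+1) (by omega) hlt
      rw [choose_two_succ] at h1
      omega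
    · have hkn1 : k + 1 = n := by omega
      have h2 : s.take (k+1) = s := by rw [hkn1, hn, List.take_length]
      rw [h2, hst] at hsum
      have h10 : n.choose 2 = k.choose 2 + k := by rw [← hkn1]; exact choose_two_succ k
      omega
  have hge : ∀ x ∈ s.drop k, k ≤ x := by
    intro x hx
    obtain ⟨i, hi, rfl⟩ := List.mem_iff_getElem.mp hx
    rw [List.getElem_drop]
    calc k ≤ s[k]'(by omega) := hsk
    _ ≤ _ := sorted_getElem_le hss (Nat.le_add_right _ _) (by simp at hi; omega)
  have hlt : ∀ x ∈ s.take k, x < k := by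
    intro x hx
    rcases Nat.eq_zero_or_pos k with h0 | hkpos
    · rw [h0] at hx; simp at hx
    · have hsum : (s.take k).sum = (s.take (k-1)).sum + s[k-1]'(by omega) := by
        have h3 := List.sum_take_succ s (k-1) (by omega)
        have h4 : k - 1 + 1 = k := by omega
        rw [h4] at h3
        exact h3
      have hprev : (k-1).choose 2 ≤ (s.take (k-1)).sum := by
        rcases Nat.eq_zero_or_pos (k-1) with h0 | hpos
        · rw [h0]; exact Nat.zero_le _
        · exact hsp (k-1) hpos (by omega)
      have hch : k.choose 2 = (k-1).choose 2 + (k-1) := by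
        have h5 := choose_two_succ (k-1)
        have h4 : k - 1 + 1 = k := by omega
        rw [h4] at h5
        omega
      have hlast : s[k-1]'(by omega) ≤ k - 1 := by omega
      obtain ⟨i, hi, rfl⟩ := List.mem_iff_getElem.mp hx
      rw [List.getElem_take]
      have hilt : i < k := by simp at hi; omega
      calc s[i]'(by omega) ≤ s[k-1]'(by omega) := sorted_getElem_le hss (by omega) (by omega)
      _ ≤ k - 1 := hlast
      _ < k := by omega
  have hul : (s.take k).length = k := by rw [List.length_take]; omega
  have hdl : (s.drop k).length = n - k := by rw [List.length_drop]
  have htl : ((s.drop k).map (· - k)).length = n - k := by rw [List.length_map, hdl]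
  refine ⟨s.take k, (s.drop k).map (· - k), ?_, ?_, ?_, ?_⟩
  · refine ⟨List.Pairwise.sublist (List.take_sublist _ _) hss, ?_, ?_, ?_⟩
    · intro x hx; rw [hul]; exact hlt x hx
    · intro j hj hjlen
      rw [hul] at hjlen
      rw [List.take_take, min_eq_left (le_of_lt hjlen)]
      exact hsp j hj (by omega)
    · rw [hul]; exact hk
  · have hdropsum : (s.take k).sum + (s.drop k).sum = s.sum := by
      conv_rhs => rw [← List.take_append_drop k s]
      rw [List.sum_append]
    have hchn : n.choose 2 = k.choose 2 + k * (n-k) + (n-k).choose 2 := by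
      have h6 := choose_two_add k (n-k)
      rw [Nat.add_sub_cancel' (le_of_lt hkn)] at h6
      exact h6
    have hprefix : ∀ j, 0 < j → j < n - k →
        j.choose 2 < ((((s.drop k).map (· - k))).take j).sum := by
      intro j hj hjlen
      rw [← List.map_take]
      have hm : ∀ x ∈ (s.drop k).take j, k ≤ x :=
        fun x hx => hge x (List.mem_of_mem_take hx)
      have hml : ((s.drop k).take j).length = j := by
        rw [List.length_take]; omega
      have hsub := sum_map_sub_const ((s.drop k).take j) k hm
      rw [hml] at hsub
      have htakeadd : (s.take (k+j)).sum = (s.take k).sum + ((s.drop k).take j).sum := by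
        rw [List.take_add, List.sum_append]
      have hstr := hstrict (k+j) (by omega) (by omega)
      have hchkj : (k+j).choose 2 = k.choose 2 + k*j + j.choose 2 := choose_two_add k j
      have hjk : j * k = k * j := Nat.mul_comm _ _
      omega
    refine ⟨⟨?_, ?_, ?_, ?_⟩, ?_, fun j hj hjl => hprefix j hj (htl ▸ hjl)⟩
    · refine List.Pairwise.map _ (fun a b h => Nat.sub_le_sub_right h k) ?_
      exact List.Pairwise.sublist (List.drop_sublist _ _) hss
    · intro x hx
      rw [htl]
      obtain ⟨z, hz, rfl⟩ := List.mem_map.mp hx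
      have h1 := hsb z (List.mem_of_mem_drop hz)
      omega
    · intro j hj hjlen
      rw [htl] at hjlen
      exact le_of_lt (hprefix j hj hjlen)
    · rw [htl]
      have hsub := sum_map_sub_const (s.drop k) k hge
      rw [hdl] at hsub
      have h7 : k * (n-k) = (n-k) * k := Nat.mul_comm _ _
      omega
    · intro hnil
      have h8 := congrArg List.length hnil
      rw [htl] at h8
      simp at h8
      omega
  · rw [dsum, hul, List.map_map]
    have h9 : ((s.drop k).map ((· + k) ∘ (· - k))) = s.drop k := by
      rw [List.map_congr_left (g := id) (fun x hx => by have := hge x hx; simp; omega)]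
      exact List.map_id _
    rw [h9, List.take_append_drop]
  · rw [List.length_take]; omega

lemma isScoreSeq_nil : IsScoreSeq [] := ⟨List.Pairwise.nil, by simp, by simp, by simp⟩

instance scoreFinite (m : ℕ) : Finite {s : List ℕ // IsScoreSeq s ∧ s.length = m} := by
  apply Finite.of_injective (f := fun (s : {s : List ℕ // IsScoreSeq s ∧ s.length = m}) =>
    (fun i : Fin m =>
      (⟨s.1[i.1]'(by rw [s.2.2]; exact i.2), by
        have h := s.2.1.2.1 _ (s.1.getElem_mem (by rw [s.2.2]; exact i.2))
        have hl := s.2.2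
        omega⟩ : Fin m)))
  intro a b h
  apply Subtype.ext
  apply List.ext_getElem (by rw [a.2.2, b.2.2])
  intro i h1 h2
  have h3 : i < m := by rw [← a.2.2]; exact h1
  have h4 := congrFun h ⟨i, h3⟩
  simpa [Fin.ext_iff] using h4

instance strongFinite (m : ℕ) : Finite {s : List ℕ // IsStrongScoreSeq s ∧ s.length = m} := by
  apply Finite.of_injective (f := fun (s : {s : List ℕ // IsStrongScoreSeq s ∧ s.length = m}) =>
    (⟨s.1, s.2.1.1, s.2.2⟩ : {s : List ℕ // IsScoreSeq s ∧ s.length = m}))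
  intro a b h
  simpa [Subtype.ext_iff] using h

lemma scoreCard_zero : scoreCard 0 = 1 := by
  have : Unique {s : List ℕ // IsScoreSeq s ∧ s.length = 0} :=
    { default := ⟨[], isScoreSeq_nil, rfl⟩,
      uniq := fun a => Subtype.ext (List.length_eq_zero_iff.mp a.2.2) }
  exact Nat.card_unique

lemma card_eq (n : ℕ) (hn : 1 ≤ n) :
    scoreCard n = ∑ k ∈ Finset.range n, scoreCard k * strongCard (n - k) := by
  classical
  let F : (Σ k : Fin n, {u : List ℕ // IsScoreSeq u ∧ u.length = k} ×
      {t : List ℕ // IsStrongScoreSeq t ∧ t.length = n - k}) →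
      {s : List ℕ // IsScoreSeq s ∧ s.length = n} := fun x =>
    ⟨dsum x.2.1.1 x.2.2.1, isScoreSeq_dsum x.2.1.2.1 x.2.2.2.1, by
      rw [dsum_length, x.2.1.2.2, x.2.2.2.2]
      have := x.1.isLt; omega⟩
  have hbij : Function.Bijective F := by
    constructor
    · rintro ⟨k, u, t⟩ ⟨k', u', t'⟩ h
      have hv : dsum u.1 t.1 = dsum u'.1 t'.1 := congrArg Subtype.val h
      obtain ⟨h1, h2⟩ := dsum_inj u.2.1 t.2.1 u'.2.1 t'.2.1 hv
      have hk : k = k' := Fin.ext (by rw [← u.2.2, ← u'.2.2, h1])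
      subst hk
      exact congrArg (Sigma.mk k) (Prod.ext_iff.mpr ⟨Subtype.ext h1, Subtype.ext h2⟩)
    · rintro ⟨s, hs, hlen⟩
      have hne : s ≠ [] := by
        intro h0
        rw [h0] at hlen
        simp at hlen
        omega
      obtain ⟨u, t, hu, ht, heq, hult⟩ := exists_decomp hs hne
      have hlen2 : u.length + t.length = n := by
        rw [← dsum_length, heq, hlen]
      have hkn : u.length < n := by rw [← hlen]; exact hult
      refine ⟨⟨⟨u.length, hkn⟩, ⟨u, hu, rfl⟩, ⟨t, ht, by simp; omega⟩⟩, ?_⟩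
      exact Subtype.ext heq
  letI : ∀ m, Fintype {s : List ℕ // IsScoreSeq s ∧ s.length = m} :=
    fun m => Fintype.ofFinite _
  letI : ∀ m, Fintype {s : List ℕ // IsStrongScoreSeq s ∧ s.length = m} :=
    fun m => Fintype.ofFinite _
  have h1 := Nat.card_eq_of_bijective F hbij
  rw [Nat.card_eq_fintype_card, Nat.card_eq_fintype_card, Fintype.card_sigma] at h1
  calc scoreCard n = Fintype.card {s : List ℕ // IsScoreSeq s ∧ s.length = n} :=
        Nat.card_eq_fintype_card
  _ = ∑ k : Fin n, Fintype.card ({u : List ℕ // IsScoreSeq u ∧ u.length = k} ×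
        {t : List ℕ // IsStrongScoreSeq t ∧ t.length = n - k}) := h1.symm
  _ = ∑ k : Fin n, scoreCard k * strongCard (n - k) := by
      refine Finset.sum_congr rfl (fun k _ => ?_)
      rw [Fintype.card_prod, scoreCard, strongCard,
        Nat.card_eq_fintype_card, Nat.card_eq_fintype_card]
  _ = ∑ k ∈ Finset.range n, scoreCard k * strongCard (n - k) :=
      Fin.sum_univ_eq_sum_range (fun k => scoreCard k * strongCard (n - k)) n

lemma card_eq' (n : ℕ) (hn : 1 ≤ n) :
    scoreCard n = strongCard n +
      ∑ i ∈ Finset.Icc 1 (n - 1), strongCard i * scoreCard (n - i) := by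
  have key := card_eq n hn
  have hsplit : ∑ k ∈ Finset.range n, scoreCard k * strongCard (n - k) =
      (∑ k ∈ Finset.range (n-1), scoreCard (k+1) * strongCard (n - (k+1))) +
        scoreCard 0 * strongCard (n - 0) := by
    have hn1 : n = (n - 1) + 1 := by omega
    rw [hn1]
    rw [Finset.sum_range_succ']
    simp only [← hn1]
  have hIcc : ∑ i ∈ Finset.Icc 1 (n-1), scoreCard i * strongCard (n - i) =
      ∑ k ∈ Finset.range (n-1), scoreCard (k+1) * strongCard (n - (k+1)) := by
    rw [← Finset.Ico_add_one_right_eq_Icc, (by omega : n - 1 + 1 = n), Finset.sum_Ico_eq_sum_range]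
    refine Finset.sum_congr (by congr 1) (fun k _ => by rw [Nat.add_comm 1 k])
  have hrefl : ∑ i ∈ Finset.Icc 1 (n-1), scoreCard i * strongCard (n - i) =
      ∑ i ∈ Finset.Icc 1 (n-1), strongCard i * scoreCard (n - i) := by
    refine Finset.sum_nbij' (i := fun a => n - a) (j := fun a => n - a) ?_ ?_ ?_ ?_ ?_
    · intro a ha
      simp only [Finset.mem_Icc] at ha ⊢
      omega
    · intro a ha
      simp only [Finset.mem_Icc] at ha ⊢
      omega
    · intro a ha
      simp only [Finset.mem_Icc] at ha
      show n - (n - a) = a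
      omega
    · intro a ha
      simp only [Finset.mem_Icc] at ha
      show n - (n - a) = a
      omega
    · intro a ha
      simp only [Finset.mem_Icc] at ha
      show scoreCard a * strongCard (n - a) =
        strongCard (n - a) * scoreCard (n - (n - a))
      rw [(by omega : n - (n - a) = a), Nat.mul_comm]
  rw [key, hsplit, ← hIcc, hrefl, scoreCard_zero, Nat.one_mul, Nat.sub_zero]
  omega


/-- `|T_n| = |S_n| − ∑_{i=1}^{n-1} |T_i|·|S_{n-i}|`. -/
theorem strongCard_recursion (n : ℕ) (hn : 1 ≤ n) :
    (strongCard n : ℤ) =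
      (scoreCard n : ℤ) -
        ∑ i ∈ Finset.Icc 1 (n - 1), (strongCard i : ℤ) * (scoreCard (n - i) : ℤ) := by
  have key := card_eq' n hn
  have hz : (scoreCard n : ℤ) = (strongCard n : ℤ) +
      ∑ i ∈ Finset.Icc 1 (n - 1), (strongCard i : ℤ) * (scoreCard (n - i) : ℤ) := by
    exact_mod_cast congrArg (Nat.cast (R := ℤ)) key
  linarith
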